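/- arXiv:2210.02272 — 2 statements merged into one kernel-verified Lean document; each statement's English description precedes it below -/
import Mathlib

section
/- Let Ω ⊆ ℝ^d be a measurable set with finite Lebesgue measure and let J be a nonempty finite index set. For all j,k ∈ J let β_{jk} ∈ L^∞(Ω) and β_j^e ∈ L^∞(Ω) be nonnegative almost everywhere, and assume the symmetry β_{jk} = β_{kj} almost everywhere for all j,k ∈ J. Then for every family (p_j)_{j∈J} in L²(Ω), the coupling forms satisfy the coercivity bound Σ_{j∈J} C_j((p_k)_{k∈J}, p_j) ≥ Σ_{j∈J} ∫_Ω β_j^e p_j². -/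
open MeasureTheory

/-- Coercivity of the network coupling forms `C_j` (Proposition 3, coercivity part):
`∑_j C_j((p_k)_k, p_j) ≥ ∑_j ∫_Ω β_j^e p_j²`. -/
theorem mpet_coupling_coercivity
    (d : ℕ) (Ω : Set (EuclideanSpace ℝ (Fin d))) (hΩ : MeasurableSet Ω)
    (hfin : volume Ω < ⊤)
    (J : Type) [Fintype J] [Nonempty J]
    (β : J → J → EuclideanSpace ℝ (Fin d) → ℝ)
    (βe : J → EuclideanSpace ℝ (Fin d) → ℝ)
    (hβ : ∀ j k, MemLp (β j k) ⊤ (volume.restrict Ω))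
    (hβe : ∀ j, MemLp (βe j) ⊤ (volume.restrict Ω))
    (hβ0 : ∀ j k, ∀ᵐ x ∂(volume.restrict Ω), 0 ≤ β j k x)
    (hβe0 : ∀ j, ∀ᵐ x ∂(volume.restrict Ω), 0 ≤ βe j x)
    (hβsym : ∀ j k, β j k =ᵐ[volume.restrict Ω] β k j)
    (p : J → EuclideanSpace ℝ (Fin d) → ℝ)
    (hp : ∀ j, MemLp (p j) 2 (volume.restrict Ω))
    (C : J → (J → EuclideanSpace ℝ (Fin d) → ℝ) →
      (EuclideanSpace ℝ (Fin d) → ℝ) → ℝ)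
    (hC : ∀ j pp qq, C j pp qq =
      (∑ k, ∫ x in Ω, β j k x * (pp j x - pp k x) * qq x) +
        ∫ x in Ω, βe j x * pp j x * qq x) :
    ∑ j, C j p (p j) ≥ ∑ j, ∫ x in Ω, βe j x * (p j x) ^ 2 := by
  set μ := volume.restrict Ω with hμ
  -- integrability of the coupling integrands
  have key : ∀ a b j k : J,
      Integrable (fun x => β a b x * ((p j x - p k x) * p j x)) μ := by
    intro a b j k
    have h1 : MemLp ((fun x => p j x - p k x) • p j) 1 μ :=
      (hp j).smul ((hp j).sub (hp k)) (hpqr := ⟨by simp [one_div, ENNReal.inv_two_add_inv_two]⟩)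
    have h2 : MemLp ((β a b) • ((fun x => p j x - p k x) • p j)) 1 μ :=
      h1.smul (hβ a b) (hpqr := ⟨by simp⟩)
    have := memLp_one_iff_integrable.mp h2
    exact this
  have key' : ∀ a b j k : J,
      Integrable (fun x => β a b x * (p j x - p k x) * p j x) μ := by
    intro a b j k
    simpa [mul_assoc] using key a b j k
  set I : J → J → ℝ := fun j k => ∫ x in Ω, β j k x * (p j x - p k x) * p j x with hI
  have pair : ∀ j k, 0 ≤ I j k + I k j := by
    intro j k
    have hswap : I k j = ∫ x in Ω, β j k x * (p k x - p j x) * p k x := by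
      refine integral_congr_ae ?_
      filter_upwards [hβsym k j] with x hx
      rw [hx]
    rw [hswap, hI]
    rw [← integral_add (key' j k j k) (key' j k k j)]
    apply integral_nonneg_of_ae
    filter_upwards [hβ0 j k] with x hx
    have : β j k x * (p j x - p k x) * p j x + β j k x * (p k x - p j x) * p k x
        = β j k x * (p j x - p k x) ^ 2 := by ring
    rw [this]
    exact mul_nonneg hx (sq_nonneg _)
  have Snn : 0 ≤ ∑ j, ∑ k, I j k := by
    have h2 : 0 ≤ (∑ j, ∑ k, I j k) + (∑ j, ∑ k, I k j) := by
      rw [← Finset.sum_add_distrib]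
      apply Finset.sum_nonneg
      intro j _
      rw [← Finset.sum_add_distrib]
      exact Finset.sum_nonneg fun k _ => pair j k
    have h3 : (∑ j, ∑ k, I k j) = ∑ j, ∑ k, I j k := Finset.sum_comm
    linarith
  have hβe_eq : ∀ j, (∫ x in Ω, βe j x * p j x * p j x)
      = ∫ x in Ω, βe j x * (p j x) ^ 2 := by
    intro j
    apply integral_congr_ae
    filter_upwards with x
    ring
  simp only [hC]
  have : ∑ j, ((∑ k, ∫ x in Ω, β j k x * (p j x - p k x) * p j x)
      + ∫ x in Ω, βe j x * p j x * p j x)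
      = (∑ j, ∑ k, I j k) + ∑ j, ∫ x in Ω, βe j x * (p j x) ^ 2 := by
    rw [Finset.sum_add_distrib]
    congr 1
    exact Finset.sum_congr rfl fun j _ => hβe_eq j
  rw [this]
  linarith
end

section
/- Let J be a nonempty finite index set and N, M ∈ ℕ. Let M_u ∈ ℝ^{N×N} be symmetric positive definite, K_u ∈ ℝ^{N×N} symmetric positive semidefinite, and for each k ∈ J let M_k ∈ ℝ^{M×M} be symmetric positive definite, K_k, C_k^e ∈ ℝ^{M×M} symmetric positive semidefinite, B_k ∈ ℝ^{M×N}, and for all j,k ∈ J let C_{kj} ∈ ℝ^{M×M} be symmetric positive semidefinite with C_{kj} = C_{jk}. Let T > 0, U ∈ C²([0,T]; ℝ^N), P_k ∈ C¹([0,T]; ℝ^M) for k ∈ J, F ∈ C⁰([0,T]; ℝ^N), G_k ∈ C⁰([0,T]; ℝ^M), and assume for all t ∈ [0,T]: M_u U''(t) + K_u U(t) − Σ_{k∈J} B_kᵀ P_k(t) = F(t) and, for each k ∈ J, M_k P_k'(t) + B_k U'(t) + K_k P_k(t) + Σ_{j∈J} C_{kj}(P_k(t) − P_j(t)) + C_k^e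 P_k(t) = G_k(t). Define the energy E(t) = ⟨M_u U'(t), U'(t)⟩ + ⟨K_u U(t), U(t)⟩ + Σ_{k∈J} ⟨M_k P_k(t), P_k(t)⟩. Then E is differentiable on [0,T] and for all t, E'(t) = 2⟨F(t), U'(t)⟩ + 2 Σ_{k∈J} ⟨G_k(t), P_k(t)⟩ − 2 Σ_{k∈J} ⟨K_k P_k(t), P_k(t)⟩ − 2 Σ_{k∈J} ⟨C_k^e P_k(t), P_k(t)⟩ − Σ_{k∈J} Σ_{j∈J} ⟨C_{kj}(P_k(t) − P_j(t)), P_k(t) − P_j(t)⟩, where ⟨·,·⟩ denotes the Euclidean inner product. -/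
open Matrix

private lemma sum_dot {ι : Type} [Fintype ι] {n : ℕ} (v : ι → Fin n → ℝ) (w : Fin n → ℝ) :
    (∑ k, v k) ⬝ᵥ w = ∑ k, v k ⬝ᵥ w := by
  simp only [dotProduct, Finset.sum_apply, Finset.sum_mul]
  exact Finset.sum_comm

private lemma symm_dot {n : ℕ} {A : Matrix (Fin n) (Fin n) ℝ} (hA : Aᵀ = A)
    (a b : Fin n → ℝ) : A.mulVec a ⬝ᵥ b = A.mulVec b ⬝ᵥ a := by
  rw [dotProduct_comm, Matrix.dotProduct_mulVec, ← Matrix.mulVec_transpose, hA]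

private lemma quad_hasDeriv {n : ℕ} (A : Matrix (Fin n) (Fin n) ℝ)
    {x : ℝ → Fin n → ℝ} {x' : Fin n → ℝ} {s : Set ℝ} {t : ℝ}
    (hx : HasDerivWithinAt x x' s t) :
    HasDerivWithinAt (fun τ => A.mulVec (x τ) ⬝ᵥ x τ)
      (A.mulVec x' ⬝ᵥ x t + A.mulVec (x t) ⬝ᵥ x' ) s t := by
  have hxi : ∀ i, HasDerivWithinAt (fun τ => x τ i) (x' i) s t :=
    fun i => (hasDerivWithinAt_pi.mp hx) i
  have key : HasDerivWithinAt (fun τ => ∑ i, (∑ j, A i j * x τ j) * x τ i)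
      (∑ i, ((∑ j, A i j * x' j) * x t i + (∑ j, A i j * x t j) * x' i)) s t := by
    refine HasDerivWithinAt.fun_sum (fun i _ => ?_)
    exact (HasDerivWithinAt.fun_sum (fun j _ => (hxi j).const_mul (A i j))).mul (hxi i)
  have : (∑ i, ((∑ j, A i j * x' j) * x t i + (∑ j, A i j * x t j) * x' i))
      = A.mulVec x' ⬝ᵥ x t + A.mulVec (x t) ⬝ᵥ x' := by
    rw [Finset.sum_add_distrib]
    rfl
  rw [this] at key
  exact key

/-- Energy identity for the semi-discrete dynamic MPET system in algebraic form
(Theorem 1 of the paper): testing the ODE system with `(U', (P_k))` yields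
`E'(t) = 2⟨F, U'⟩ + 2∑_k ⟨G_k, P_k⟩ − 2∑_k ⟨K_k P_k, P_k⟩ − 2∑_k ⟨C_k^e P_k, P_k⟩
  − ∑_k ∑_j ⟨C_{kj}(P_k − P_j), P_k − P_j⟩`. -/
theorem mpet_semidiscrete_energy_identity
    (J : Type) [Fintype J] [Nonempty J] (N M : ℕ)
    (Mu : Matrix (Fin N) (Fin N) ℝ) (hMu : Mu.PosDef)
    (Ku : Matrix (Fin N) (Fin N) ℝ) (hKu : Ku.PosSemidef)
    (Mk : J → Matrix (Fin M) (Fin M) ℝ) (hMk : ∀ k, (Mk k).PosDef)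
    (Kk : J → Matrix (Fin M) (Fin M) ℝ) (hKk : ∀ k, (Kk k).PosSemidef)
    (Ce : J → Matrix (Fin M) (Fin M) ℝ) (hCe : ∀ k, (Ce k).PosSemidef)
    (B : J → Matrix (Fin M) (Fin N) ℝ)
    (C : J → J → Matrix (Fin M) (Fin M) ℝ) (hC : ∀ k j, (C k j).PosSemidef)
    (hCsym : ∀ k j, C k j = C j k)
    (T : ℝ) (hT : 0 < T)
    (U U' U'' : ℝ → Fin N → ℝ)
    (P P' : J → ℝ → Fin M → ℝ)
    (F : ℝ → Fin N → ℝ) (G : J → ℝ → Fin M → ℝ)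
    (hU : ∀ t ∈ Set.Icc 0 T, HasDerivWithinAt U (U' t) (Set.Icc 0 T) t)
    (hU' : ∀ t ∈ Set.Icc 0 T, HasDerivWithinAt U' (U'' t) (Set.Icc 0 T) t)
    (hU'' : ContinuousOn U'' (Set.Icc 0 T))
    (hP : ∀ k, ∀ t ∈ Set.Icc 0 T, HasDerivWithinAt (P k) (P' k t) (Set.Icc 0 T) t)
    (hP' : ∀ k, ContinuousOn (P' k) (Set.Icc 0 T))
    (hF : ContinuousOn F (Set.Icc 0 T))
    (hG : ∀ k, ContinuousOn (G k) (Set.Icc 0 T))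
    (heq1 : ∀ t ∈ Set.Icc 0 T,
      Mu.mulVec (U'' t) + Ku.mulVec (U t) - ∑ k, (B k)ᵀ.mulVec (P k t) = F t)
    (heq2 : ∀ k, ∀ t ∈ Set.Icc 0 T,
      (Mk k).mulVec (P' k t) + (B k).mulVec (U' t) + (Kk k).mulVec (P k t)
        + (∑ j, (C k j).mulVec (P k t - P j t)) + (Ce k).mulVec (P k t) = G k t)
    (E : ℝ → ℝ)
    (hE : ∀ t, E t = Mu.mulVec (U' t) ⬝ᵥ U' t + Ku.mulVec (U t) ⬝ᵥ U t
      + ∑ k, (Mk k).mulVec (P k t) ⬝ᵥ P k t) :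
    ∀ t ∈ Set.Icc 0 T, HasDerivWithinAt E
      (2 * (F t ⬝ᵥ U' t) + 2 * (∑ k, G k t ⬝ᵥ P k t)
        - 2 * (∑ k, (Kk k).mulVec (P k t) ⬝ᵥ P k t)
        - 2 * (∑ k, (Ce k).mulVec (P k t) ⬝ᵥ P k t)
        - ∑ k, ∑ j, (C k j).mulVec (P k t - P j t) ⬝ᵥ (P k t - P j t))
      (Set.Icc 0 T) t := by
  have hMuS : Muᵀ = Mu := by exact (by simpa using hMu.1 : Mu.IsSymm)
  have hKuS : Kuᵀ = Ku := by exact (by simpa using hKu.1 : Ku.IsSymm)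
  have hMkS : ∀ k, (Mk k)ᵀ = Mk k := fun k => by exact (by simpa using (hMk k).1 : (Mk k).IsSymm)
  intro t ht
  -- raw derivative
  have hD : HasDerivWithinAt E
      ((Mu.mulVec (U'' t) ⬝ᵥ U' t + Mu.mulVec (U' t) ⬝ᵥ U'' t)
        + (Ku.mulVec (U' t) ⬝ᵥ U t + Ku.mulVec (U t) ⬝ᵥ U' t)
        + ∑ k, ((Mk k).mulVec (P' k t) ⬝ᵥ P k t + (Mk k).mulVec (P k t) ⬝ᵥ P' k t))
      (Set.Icc 0 T) t := by
    have hEf : E = fun τ => Mu.mulVec (U' τ) ⬝ᵥ U' τ + Ku.mulVec (U τ) ⬝ᵥ U τ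
        + ∑ k, (Mk k).mulVec (P k τ) ⬝ᵥ P k τ := funext hE
    rw [hEf]
    exact ((quad_hasDeriv Mu (hU' t ht)).add (quad_hasDeriv Ku (hU t ht))).add
      (HasDerivWithinAt.fun_sum (fun k _ => quad_hasDeriv (Mk k) (hP k t ht)))
  -- simplify raw derivative using symmetry
  have hsym1 : Mu.mulVec (U' t) ⬝ᵥ U'' t = Mu.mulVec (U'' t) ⬝ᵥ U' t := symm_dot hMuS _ _
  have hsym2 : Ku.mulVec (U' t) ⬝ᵥ U t = Ku.mulVec (U t) ⬝ᵥ U' t := symm_dot hKuS _ _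
  have hsym3 : ∀ k, (Mk k).mulVec (P k t) ⬝ᵥ P' k t = (Mk k).mulVec (P' k t) ⬝ᵥ P k t :=
    fun k => symm_dot (hMkS k) _ _
  -- scalar consequence of heq1
  have h1 : Mu.mulVec (U'' t) ⬝ᵥ U' t + Ku.mulVec (U t) ⬝ᵥ U' t
      - ∑ k, (B k)ᵀ.mulVec (P k t) ⬝ᵥ U' t = F t ⬝ᵥ U' t := by
    have := congrArg (fun v => v ⬝ᵥ U' t) (heq1 t ht)
    simpa [add_dotProduct, sub_dotProduct, sum_dot] using this
  -- scalar consequences of heq2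
  have h2 : ∀ k, (Mk k).mulVec (P' k t) ⬝ᵥ P k t + (B k).mulVec (U' t) ⬝ᵥ P k t
      + (Kk k).mulVec (P k t) ⬝ᵥ P k t
      + (∑ j, (C k j).mulVec (P k t - P j t) ⬝ᵥ P k t)
      + (Ce k).mulVec (P k t) ⬝ᵥ P k t = G k t ⬝ᵥ P k t := by
    intro k
    have := congrArg (fun v => v ⬝ᵥ P k t) (heq2 k t ht)
    simpa [add_dotProduct, sum_dot] using this
  -- coupling term relation
  have hB : ∀ k, (B k)ᵀ.mulVec (P k t) ⬝ᵥ U' t = (B k).mulVec (U' t) ⬝ᵥ P k t := by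
    intro k
    rw [Matrix.mulVec_transpose, ← Matrix.dotProduct_mulVec, dotProduct_comm]
  -- cross-coupling symmetry identity
  have hcross : ∑ k, ∑ j, (C k j).mulVec (P k t - P j t) ⬝ᵥ (P k t - P j t)
      = 2 * ∑ k, ∑ j, (C k j).mulVec (P k t - P j t) ⬝ᵥ P k t := by
    have hswap : ∑ k, ∑ j, (C k j).mulVec (P k t - P j t) ⬝ᵥ P j t
        = - ∑ k, ∑ j, (C k j).mulVec (P k t - P j t) ⬝ᵥ P k t := by
      rw [Finset.sum_comm]
      rw [← Finset.sum_neg_distrib]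
      refine Finset.sum_congr rfl (fun j _ => ?_)
      rw [← Finset.sum_neg_distrib]
      refine Finset.sum_congr rfl (fun k _ => ?_)
      rw [hCsym k j]
      have : P k t - P j t = -(P j t - P k t) := by abel
      rw [this, Matrix.mulVec_neg, neg_dotProduct]
    simp only [dotProduct_sub]
    rw [Finset.sum_congr rfl (fun k _ => Finset.sum_sub_distrib _ _),
      Finset.sum_sub_distrib, hswap]
    ring
  -- combine
  have hval : (Mu.mulVec (U'' t) ⬝ᵥ U' t + Mu.mulVec (U' t) ⬝ᵥ U'' t)
        + (Ku.mulVec (U' t) ⬝ᵥ U t + Ku.mulVec (U t) ⬝ᵥ U' t)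
        + ∑ k, ((Mk k).mulVec (P' k t) ⬝ᵥ P k t + (Mk k).mulVec (P k t) ⬝ᵥ P' k t)
      = 2 * (F t ⬝ᵥ U' t) + 2 * (∑ k, G k t ⬝ᵥ P k t)
        - 2 * (∑ k, (Kk k).mulVec (P k t) ⬝ᵥ P k t)
        - 2 * (∑ k, (Ce k).mulVec (P k t) ⬝ᵥ P k t)
        - ∑ k, ∑ j, (C k j).mulVec (P k t - P j t) ⬝ᵥ (P k t - P j t) := by
    have hsum : ∑ k, ((Mk k).mulVec (P' k t) ⬝ᵥ P k t + (Mk k).mulVec (P k t) ⬝ᵥ P' k t)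
        = 2 * ∑ k, (Mk k).mulVec (P' k t) ⬝ᵥ P k t := by
      rw [Finset.mul_sum]
      exact Finset.sum_congr rfl (fun k _ => by rw [hsym3 k]; ring)
    have hBsum : ∑ k, (B k)ᵀ.mulVec (P k t) ⬝ᵥ U' t = ∑ k, (B k).mulVec (U' t) ⬝ᵥ P k t :=
      Finset.sum_congr rfl (fun k _ => hB k)
    rw [hBsum] at h1
    have hA : Mu.mulVec (U'' t) ⬝ᵥ U' t = F t ⬝ᵥ U' t - Ku.mulVec (U t) ⬝ᵥ U' t
        + ∑ k, (B k).mulVec (U' t) ⬝ᵥ P k t := by linarith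
    have hS : ∑ k, (Mk k).mulVec (P' k t) ⬝ᵥ P k t
        = ∑ k, G k t ⬝ᵥ P k t - ∑ k, (B k).mulVec (U' t) ⬝ᵥ P k t
          - ∑ k, (Kk k).mulVec (P k t) ⬝ᵥ P k t
          - ∑ k, ∑ j, (C k j).mulVec (P k t - P j t) ⬝ᵥ P k t
          - ∑ k, (Ce k).mulVec (P k t) ⬝ᵥ P k t := by
      rw [← Finset.sum_sub_distrib, ← Finset.sum_sub_distrib, ← Finset.sum_sub_distrib,
        ← Finset.sum_sub_distrib]
      refine Finset.sum_congr rfl (fun k _ => ?_)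
      have := h2 k
      linarith
    rw [hsym1, hsym2, hcross, hsum, hA, hS]
    ring
  rw [← hval]
  exact hD
end
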